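/- Fix a real α with 0 < α < 1 and define F(τ) = ((1−α)/α) · τ^{(1/α)−1} · ∫_τ^∞ z^{−1/α} e^{−z} dz for τ > 0. Let ε > 0 and set y = (1−α)/(α·ε). Assume y > 1, log y + ⌊1/α⌋ > 2, and y⁶·log y > 1. Then every τ > 0 with F(τ) = ε satisfies log y − log(log y) − ⌈1/α⌉ < τ < log y. -/

import Mathlib

open MeasureTheory

open Set Real Filter Topology

lemma aux_integrable {a τ : ℝ} (ha : a ≤ 0) (hτ : 0 < τ) :
    IntegrableOn (fun z : ℝ => z ^ a * Real.exp (-z)) (Set.Ioi τ) := by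
  have hint : IntegrableOn (fun z : ℝ => τ ^ a * Real.exp (-z)) (Set.Ioi τ) := by
    have := ((exp_neg_integrableOn_Ioi τ (one_pos))).const_mul (τ ^ a)
    simp only [neg_mul, one_mul] at this
    exact this
  refine MeasureTheory.Integrable.mono hint ?_ ?_
  · apply ContinuousOn.aestronglyMeasurable _ measurableSet_Ioi
    apply ContinuousOn.mul
    · exact fun z hz => (Real.continuousAt_rpow_const z a
        (Or.inl (ne_of_gt (hτ.trans hz)))).continuousWithinAt
    · exact (Real.continuous_exp.comp continuous_neg).continuousOn
  · rw [ae_restrict_iff' measurableSet_Ioi]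
    refine Filter.Eventually.of_forall (fun z hz => ?_)
    have hz0 : (0:ℝ) < z := hτ.trans hz
    rw [Real.norm_eq_abs, Real.norm_eq_abs, abs_of_nonneg, abs_of_nonneg]
    · exact mul_le_mul_of_nonneg_right
        (Real.rpow_le_rpow_of_nonpos hτ (le_of_lt hz) ha) (Real.exp_pos _).le
    · positivity
    · positivity


lemma aux_integrable' {p τ : ℝ} (hp : 1 < p) (hτ : 0 < τ) :
    IntegrableOn (fun z : ℝ => (z + p - 1) * (z ^ (-p) * Real.exp (-z))) (Set.Ioi τ) := by
  have h1 := aux_integrable (a := 1 - p) (by linarith) hτ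
  have h2 := (aux_integrable (a := -p) (by linarith) hτ).const_mul (p - 1)
  refine MeasureTheory.IntegrableOn.congr_fun (h1.add h2) (fun z hz => ?_) measurableSet_Ioi
  have hz0 : (0:ℝ) < z := hτ.trans hz
  have hzz : z ^ (1 - p) = z * z ^ (-p) := by
    rw [show (1:ℝ) - p = 1 + (-p) by ring, Real.rpow_add hz0, Real.rpow_one]
  simp only [Pi.add_apply, hzz]; ring

lemma aux_identity {p τ : ℝ} (hp : 1 < p) (hτ : 0 < τ) :
    ∫ z in Set.Ioi τ, (z + p - 1) * (z ^ (-p) * Real.exp (-z))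
      = τ ^ (1 - p) * Real.exp (-τ) := by
  have hderiv : ∀ x ∈ Set.Ici τ, HasDerivAt (fun z : ℝ => -(z ^ (1 - p) * Real.exp (-z)))
      ((x + p - 1) * (x ^ (-p) * Real.exp (-x))) x := by
    intro x hx
    have hx0 : (0:ℝ) < x := lt_of_lt_of_le hτ hx
    have h1 : HasDerivAt (fun z : ℝ => z ^ (1 - p)) ((1 - p) * x ^ (-p)) x := by
      have := Real.hasDerivAt_rpow_const (x := x) (p := 1 - p) (Or.inl (ne_of_gt hx0))
      simpa [show (1:ℝ) - p - 1 = -p by ring] using this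
    have h2 : HasDerivAt (fun z : ℝ => Real.exp (-z)) (-Real.exp (-x)) x := by
      simpa using ((hasDerivAt_id x).neg.exp)
    have h := (h1.mul h2).neg
    have hzz : x ^ (1 - p) = x * x ^ (-p) := by
      rw [show (1:ℝ) - p = 1 + (-p) by ring, Real.rpow_add hx0, Real.rpow_one]
    refine h.congr_deriv ?_
    rw [hzz]; ring
  have hint := aux_integrable' hp hτ
  have htend : Tendsto (fun z : ℝ => -(z ^ (1 - p) * Real.exp (-z))) atTop (𝓝 0) := by
    have h1 : Tendsto (fun z : ℝ => z ^ (1 - p)) atTop (𝓝 0) := by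
      have := tendsto_rpow_neg_atTop (y := p - 1) (by linarith)
      simpa [show -(p-1) = 1 - p by ring] using this
    have h2 : Tendsto (fun z : ℝ => Real.exp (-z)) atTop (𝓝 0) :=
      Real.tendsto_exp_neg_atTop_nhds_zero
    have := (h1.mul h2).neg
    simpa using this
  have := integral_Ioi_of_hasDerivAt_of_tendsto' hderiv hint htend
  rw [this]; ring


lemma aux_lower {p τ T : ℝ} (hp : 0 < p) (hτ : 0 < τ) (hT : τ < T) :
    T ^ (-p) * (Real.exp (-τ) - Real.exp (-T))
      ≤ ∫ z in Set.Ioi τ, z ^ (-p) * Real.exp (-z) := by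
  have hint := aux_integrable (a := -p) (by linarith) hτ
  have hintc : IntegrableOn (fun z : ℝ => T ^ (-p) * Real.exp (-z)) (Set.Ioc τ T) := by
    have := ((exp_neg_integrableOn_Ioi τ one_pos).mono_set
      (Set.Ioc_subset_Ioi_self : Set.Ioc τ T ⊆ Set.Ioi τ)).const_mul (T ^ (-p))
    simp only [neg_mul, one_mul] at this
    exact this
  have step1 : ∫ z in Set.Ioc τ T, z ^ (-p) * Real.exp (-z)
      ≤ ∫ z in Set.Ioi τ, z ^ (-p) * Real.exp (-z) := by
    apply setIntegral_mono_set hint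
    · filter_upwards [ae_restrict_mem measurableSet_Ioi] with z hz
      have hz0 : (0:ℝ) < z := hτ.trans hz
      positivity
    · exact HasSubset.Subset.eventuallyLE Set.Ioc_subset_Ioi_self
  have step2 : ∫ z in Set.Ioc τ T, T ^ (-p) * Real.exp (-z)
      ≤ ∫ z in Set.Ioc τ T, z ^ (-p) * Real.exp (-z) := by
    apply setIntegral_mono_on hintc (hint.mono_set Set.Ioc_subset_Ioi_self) measurableSet_Ioc
    intro z hz
    have hz0 : (0:ℝ) < z := hτ.trans hz.1
    exact mul_le_mul_of_nonneg_right
      (Real.rpow_le_rpow_of_nonpos hz0 hz.2 (by linarith)) (Real.exp_pos _).le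
  have step3 : ∫ z in Set.Ioc τ T, T ^ (-p) * Real.exp (-z)
      = T ^ (-p) * (Real.exp (-τ) - Real.exp (-T)) := by
    rw [MeasureTheory.integral_const_mul]
    congr 1
    rw [← intervalIntegral.integral_of_le hT.le]
    have h : ∫ z in τ..T, Real.exp (-z) = ∫ z in (-T)..(-τ), Real.exp z := by
      simpa using intervalIntegral.integral_comp_neg (a := τ) (b := T) (fun z => Real.exp z)
    rw [h, integral_exp]
  linarith [step1, step2, step3.le, step3.ge]

lemma aux_numeric {s : ℝ} (hs : 0 < s) (h1 : Real.log s + 2 < s)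
    (h2 : 0 < 6 * s + Real.log s) :
    0 < (Real.exp 1 / 2 - 1) * s + Real.log s + 1 := by
  have he : (2.7182818283 : ℝ) < Real.exp 1 := Real.exp_one_gt_d9
  rcases le_or_gt 1 s with h | h
  · have hl : 0 ≤ Real.log s := Real.log_nonneg h
    nlinarith
  · exfalso
    have hl : Real.log s < s - 2 := by linarith
    have hs27 : 2/7 < s := by linarith
    have hlog27 : -(3/2 : ℝ) ≤ Real.log (2/7) := by
      have hexp : (7:ℝ)/2 ≤ Real.exp (3/2) := by
        have h3 : Real.exp (3/2) * Real.exp (3/2) = Real.exp 1 ^ 3 := by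
          rw [← Real.exp_add, show (3:ℝ)/2 + 3/2 = 3 by norm_num,
            show (3:ℝ) = (3:ℕ) * 1 by norm_num, Real.exp_nat_mul]
        have hcube : (2.7182818283:ℝ)^3 < Real.exp 1 ^ 3 :=
          pow_lt_pow_left₀ he (by norm_num) (by norm_num)
        nlinarith [Real.exp_pos (3/2 : ℝ)]
      have := (Real.log_le_iff_le_exp (by norm_num : (0:ℝ) < 7/2)).mpr hexp
      have h27 : Real.log (2/7 : ℝ) = -Real.log (7/2) := by
        rw [show (2:ℝ)/7 = (7/2)⁻¹ by norm_num, Real.log_inv]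
      linarith
    have hls : Real.log (2/7) < Real.log s := Real.log_lt_log (by norm_num) hs27
    have hs_half : 1/2 < s := by linarith
    have hlneg : Real.log s < -1 := by linarith
    have hlt : s < Real.exp (-1) := by
      calc s = Real.exp (Real.log s) := (Real.exp_log hs).symm
        _ < Real.exp (-1) := Real.exp_lt_exp.mpr hlneg
    have hexpinv : Real.exp (-1 : ℝ) < 1/2 := by
      rw [Real.exp_neg]
      have h0 := Real.exp_pos 1
      have h1 : Real.exp 1 * (Real.exp 1)⁻¹ = 1 := mul_inv_cancel₀ (ne_of_gt h0)
      nlinarith [inv_pos.mpr h0]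
    linarith


set_option maxHeartbeats 1000000 in
/-- Inversion of the α < 1 gradient-descent scaling law: if
`F(τ) = ((1−α)/α)·τ^{1/α−1}·∫_τ^∞ z^{−1/α}e^{−z}dz = ε`, with `y = (1−α)/(αε)`
large enough, then `log y − log log y − ⌈1/α⌉ < τ < log y`. -/
theorem stmt19 (α ε : ℝ) (hα0 : 0 < α) (hα1 : α < 1) (hε : 0 < ε)
    (y : ℝ) (hy : y = (1 - α) / (α * ε))
    (hy1 : 1 < y)
    (hy2 : 2 < Real.log y + (⌊1/α⌋₊ : ℝ))
    (hy3 : 1 < y ^ 6 * Real.log y) :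
    ∀ τ : ℝ, 0 < τ →
      ((1 - α) / α) * τ ^ (1/α - 1) *
          (∫ z in Set.Ioi τ, z ^ (-(1/α)) * Real.exp (-z)) = ε →
      Real.log y - Real.log (Real.log y) - (⌈1/α⌉₊ : ℝ) < τ ∧ τ < Real.log y := by
  intro τ hτ hF
  set p : ℝ := 1/α with hpdef
  have hp : 1 < p := by rw [hpdef, lt_div_iff₀ hα0]; linarith
  have hq0 : (0:ℝ) < p - 1 := by linarith
  have hy0 : (0:ℝ) < y := lt_trans one_pos hy1
  set s : ℝ := Real.log y with hsdef
  have hs : 0 < s := by rw [hsdef]; exact Real.log_pos hy1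
  set I : ℝ := ∫ z in Set.Ioi τ, z ^ (-p) * Real.exp (-z) with hIdef
  set P : ℝ := τ ^ (p - 1) with hPdef
  have hP0 : 0 < P := by rw [hPdef]; exact Real.rpow_pos_of_pos hτ _
  have hfrac : (1 - α)/α = p - 1 := by rw [hpdef]; field_simp
  have hyε : y * ε = p - 1 := by rw [hy, ← hfrac]; field_simp
  have hPI : P * I = 1/y := by
    rw [hfrac] at hF
    have h1 : (p-1) * (P * I * y) = (p - 1) * 1 := by linear_combination y * hF + hyε
    have h2 : P * I * y = 1 := mul_left_cancel₀ (ne_of_gt hq0) h1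
    rw [eq_div_iff (ne_of_gt hy0)]; exact h2
  have ha0 : 0 < Real.exp (-τ) := Real.exp_pos _
  -- Upper bound: τ < s
  have hub : τ < s := by
    by_contra hcon
    push_neg at hcon
    have hid := aux_identity hp hτ
    have hmono : (τ + p - 1) * I ≤ τ ^ (1-p) * Real.exp (-τ) := by
      rw [← hid, hIdef, ← MeasureTheory.integral_const_mul]
      apply setIntegral_mono_on _ (aux_integrable' hp hτ) measurableSet_Ioi
      · intro z hz
        have hz0 : (0:ℝ) < z := hτ.trans hz
        have hnn : (0:ℝ) ≤ z ^ (-p) * Real.exp (-z) := by positivity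
        have hzτ : τ ≤ z := le_of_lt hz
        exact mul_le_mul_of_nonneg_right (by linarith only [hzτ]) hnn
      · exact (aux_integrable (a := -p) (by linarith) hτ).const_mul _
    have hPP : P * τ ^ (1 - p) = 1 := by
      rw [hPdef, ← Real.rpow_add hτ, show p - 1 + (1 - p) = (0:ℝ) by ring, Real.rpow_zero]
    have hmul : (τ + p - 1) * (1/y) ≤ Real.exp (-τ) := by
      rw [← hPI]
      calc (τ + p - 1) * (P * I) = P * ((τ + p - 1) * I) := by ring
        _ ≤ P * (τ ^ (1-p) * Real.exp (-τ)) :=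
            mul_le_mul_of_nonneg_left hmono hP0.le
        _ = (P * τ ^ (1-p)) * Real.exp (-τ) := by ring
        _ = Real.exp (-τ) := by rw [hPP, one_mul]
    have hexps : Real.exp (-τ) ≤ 1/y := by
      have h1 : Real.exp (-τ) ≤ Real.exp (-s) := Real.exp_le_exp.mpr (by linarith)
      have h2 : Real.exp (-s) = 1/y := by
        rw [hsdef, Real.exp_neg, Real.exp_log hy0, one_div]
      rw [← h2]; exact h1
    have hfloor : ((⌊p⌋₊ : ℕ) : ℝ) ≤ p := Nat.floor_le (by positivity)
    have h2' : 2 < s + p := by linarith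
    have hy' : (0:ℝ) < 1/y := by positivity
    have h3 : τ + p - 1 ≤ 1 := by nlinarith only [hmul, hexps, hy']
    linarith only [h3, h2', hcon]
  refine ⟨?_, hub⟩
  -- Lower bound
  by_contra hcon
  push_neg at hcon
  set ℓ : ℝ := Real.log s with hldef
  set M : ℝ := ((⌈p⌉₊ : ℕ) : ℝ) with hMdef
  have hM2 : (2:ℝ) ≤ M := by
    have h1 : 1 < ⌈p⌉₊ := Nat.lt_ceil.mpr (by exact_mod_cast hp)
    rw [hMdef]; exact_mod_cast h1
  have hMp : p ≤ M := by rw [hMdef]; exact_mod_cast Nat.le_ceil p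
  have hL : 0 < s - ℓ - M := lt_of_lt_of_le hτ hcon
  have he : (2.7182818283 : ℝ) < Real.exp 1 := Real.exp_one_gt_d9
  have hnum : 0 < (Real.exp 1/2 - 1) * s + ℓ + 1 := by
    rw [hldef]
    apply aux_numeric hs (by rw [← hldef]; linarith)
    have h7 := Real.log_pos hy3
    rw [Real.log_mul (by positivity) (ne_of_gt hs), Real.log_pow] at h7
    push_cast at h7
    rw [← hsdef] at h7
    rw [← hldef]
    linarith
  have hexpτ : 1/y * s * Real.exp M ≤ Real.exp (-τ) := by
    have h1 : Real.exp (-(s - ℓ - M)) ≤ Real.exp (-τ) := Real.exp_le_exp.mpr (by linarith)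
    have h2 : Real.exp (-(s - ℓ - M)) = 1/y * s * Real.exp M := by
      rw [show -(s - ℓ - M) = (-s) + ℓ + M by ring, Real.exp_add, Real.exp_add,
        Real.exp_neg, hsdef, Real.exp_log hy0, hldef, Real.exp_log hs, one_div,
        ← hsdef]
    rw [← h2]; exact h1
  have hA5 : s * Real.exp M ≤ Real.exp (-τ) * y := by
    have h0 := mul_le_mul_of_nonneg_right hexpτ hy0.le
    calc s * Real.exp M = (1/y * s * Real.exp M) * y := by field_simp
      _ ≤ Real.exp (-τ) * y := h0
  clear_value P I s M ℓ p
  rcases le_or_gt 2 p with hp2 | hp2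
  · -- Case p ≥ 2
    set k : ℝ := p / (p - 1) with hkdef
    have hk0 : (0:ℝ) < k := by rw [hkdef]; positivity
    have hk1 : 1 < k := by rw [hkdef, lt_div_iff₀ hq0]; linarith
    have hk2 : k ≤ 2 := by rw [hkdef, div_le_iff₀ hq0]; linarith
    have hk1' : k - 1 = 1/(p-1) := by rw [hkdef]; field_simp; ring
    have hqk : (k-1)*(p-1) = 1 := by rw [hkdef]; field_simp; ring
    clear_value k
    have hTgt : τ < τ * k := by linarith only [mul_pos hτ (sub_pos.mpr hk1)]
    have hlow := aux_lower (p := p) (by linarith) hτ hTgt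
    rw [← hIdef] at hlow
    have hτR : τ * (P * (τ*k) ^ (-p)) = k ^ (-p) := by
      rw [Real.mul_rpow hτ.le hk0.le, hPdef]
      have h1 : τ ^ (p-1) * τ ^ (-p) = τ ^ (-1:ℝ) := by
        rw [← Real.rpow_add hτ, show p - 1 + -p = (-1:ℝ) by ring]
      calc τ * (τ ^ (p-1) * (τ ^ (-p) * k ^ (-p)))
          = (τ ^ (p-1) * τ ^ (-p)) * τ * k ^ (-p) := by ring
        _ = τ ^ (-1:ℝ) * τ * k ^ (-p) := by rw [h1]
        _ = k ^ (-p) := by rw [Real.rpow_neg_one, inv_mul_cancel₀ (ne_of_gt hτ), one_mul]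
    have hc0 : (0:ℝ) < k ^ (-p) := Real.rpow_pos_of_pos hk0 _
    have hkp : k ^ (p : ℝ) ≤ 2 * Real.exp 1 := by
      have hsplit : k ^ (p:ℝ) = k ^ (p - 1) * k := by
        have h0 : k ^ ((p-1) + 1) = k ^ (p-1) * k ^ (1:ℝ) := Real.rpow_add hk0 _ _
        rw [show p - 1 + 1 = p by ring, Real.rpow_one] at h0
        exact h0
      have hlogk : Real.log k * (p - 1) ≤ 1 := by
        have h1 : Real.log k ≤ k - 1 := Real.log_le_sub_one_of_pos hk0
        have h2 : Real.log k * (p-1) ≤ (k - 1) * (p - 1) :=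
          mul_le_mul_of_nonneg_right h1 hq0.le
        rw [hqk] at h2; exact h2
      have h3 : k ^ ((p:ℝ) - 1) ≤ Real.exp 1 := by
        rw [Real.rpow_def_of_pos hk0]
        exact Real.exp_le_exp.mpr hlogk
      calc k ^ (p:ℝ) = k ^ ((p:ℝ)-1) * k := hsplit
        _ ≤ Real.exp 1 * 2 := mul_le_mul h3 hk2 hk0.le (Real.exp_pos 1).le
        _ = 2 * Real.exp 1 := by ring
    have hc' : 1 ≤ k ^ (-p) * (2 * Real.exp 1) := by
      have h1 : k ^ (-p) * k ^ (p:ℝ) = 1 := by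
        rw [← Real.rpow_add hk0, show -p + p = (0:ℝ) by ring, Real.rpow_zero]
      calc (1:ℝ) = k ^ (-p) * k ^ (p:ℝ) := h1.symm
        _ ≤ k ^ (-p) * (2 * Real.exp 1) := mul_le_mul_of_nonneg_left hkp hc0.le
    have hbexp : Real.exp (-(τ*k)) = Real.exp (-τ) * Real.exp (-(τ*(k-1))) := by
      rw [← Real.exp_add]; congr 1; ring
    have hA4 : Real.exp (-(τ*(k-1))) * (1 + τ*(k-1)) ≤ 1 := by
      have h1 := Real.add_one_le_exp (τ*(k-1))
      have h2 : Real.exp (-(τ*(k-1))) * Real.exp (τ*(k-1)) = 1 := by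
        rw [← Real.exp_add]; norm_num
      linarith only [mul_le_mul_of_nonneg_left h1 (Real.exp_pos (-(τ*(k-1)))).le, h2]
    have hA : Real.exp (-τ) * (τ*(k-1)) ≤
        (Real.exp (-τ) - Real.exp (-(τ*k))) * (1 + τ*(k-1)) := by
      rw [hbexp]
      linarith only [mul_nonneg ha0.le (sub_nonneg.mpr hA4)]
    have hS1 : y * (k ^ (-p) * (Real.exp (-τ) - Real.exp (-(τ*k)))) ≤ τ := by
      have h1 : P * ((τ*k) ^ (-p) * (Real.exp (-τ) - Real.exp (-(τ*k)))) ≤ 1/y := by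
        rw [← hPI]
        exact mul_le_mul_of_nonneg_left hlow hP0.le
      have h2 := mul_le_mul_of_nonneg_left h1 hτ.le
      have h3 : τ * (P * ((τ*k) ^ (-p) * (Real.exp (-τ) - Real.exp (-(τ*k)))))
          = k ^ (-p) * (Real.exp (-τ) - Real.exp (-(τ*k))) := by
        calc τ * (P * ((τ*k) ^ (-p) * (Real.exp (-τ) - Real.exp (-(τ*k)))))
            = (τ * (P * (τ*k) ^ (-p))) * (Real.exp (-τ) - Real.exp (-(τ*k))) := by ring
          _ = k ^ (-p) * (Real.exp (-τ) - Real.exp (-(τ*k))) := by rw [hτR]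
      rw [h3] at h2
      have h4 := mul_le_mul_of_nonneg_left h2 hy0.le
      have h5 : y * (τ * (1/y)) = τ := by field_simp
      rw [h5] at h4
      exact h4
    have hS2 : y * (k ^ (-p)) * (Real.exp (-τ) * (τ*(k-1))) ≤ τ * (1 + τ*(k-1)) := by
      have h1 : (0:ℝ) ≤ y * k ^ (-p) := by positivity
      have hu0 : (0:ℝ) < τ * (k-1) := mul_pos hτ (sub_pos.mpr hk1)
      calc y * (k ^ (-p)) * (Real.exp (-τ) * (τ*(k-1)))
          ≤ y * (k ^ (-p)) * ((Real.exp (-τ) - Real.exp (-(τ*k))) * (1 + τ*(k-1))) :=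
            mul_le_mul_of_nonneg_left hA h1
        _ = (y * (k ^ (-p) * (Real.exp (-τ) - Real.exp (-(τ*k))))) * (1 + τ*(k-1)) := by ring
        _ ≤ τ * (1 + τ*(k-1)) := mul_le_mul_of_nonneg_right hS1 (by linarith only [hu0])
    have hS3 : y * (k ^ (-p)) * Real.exp (-τ) * (k-1) ≤ 1 + τ*(k-1) := by
      have h1 : (y * (k ^ (-p)) * Real.exp (-τ) * (k-1)) * τ ≤ (1 + τ*(k-1)) * τ := by
        calc (y * (k ^ (-p)) * Real.exp (-τ) * (k-1)) * τ
            = y * (k ^ (-p)) * (Real.exp (-τ) * (τ*(k-1))) := by ring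
          _ ≤ τ * (1 + τ*(k-1)) := hS2
          _ = (1 + τ*(k-1)) * τ := by ring
      exact le_of_mul_le_mul_right h1 hτ
    have hS4 : k ^ (-p) * (Real.exp (-τ) * y) ≤ p - 1 + τ := by
      have h1 := mul_le_mul_of_nonneg_right hS3 hq0.le
      calc k ^ (-p) * (Real.exp (-τ) * y)
          = (y * (k ^ (-p)) * Real.exp (-τ) * (k-1)) * (p-1) := by
            rw [show (y * (k ^ (-p)) * Real.exp (-τ) * (k-1)) * (p-1)
              = (y * (k ^ (-p)) * Real.exp (-τ)) * ((k-1) * (p-1)) by ring, hqk]; ring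
        _ ≤ (1 + τ*(k-1)) * (p-1) := h1
        _ = (p-1) + τ * ((k-1)*(p-1)) := by ring
        _ = p - 1 + τ := by rw [hqk]; ring
    have hS5 : k ^ (-p) * (s * Real.exp M) ≤ p - 1 + τ :=
      le_trans (mul_le_mul_of_nonneg_left hA5 hc0.le) hS4
    have hS6 : s * Real.exp M ≤ 2 * Real.exp 1 * (p - 1 + τ) := by
      have hsm : (0:ℝ) ≤ s * Real.exp M := by positivity
      calc s * Real.exp M = 1 * (s * Real.exp M) := by ring
        _ ≤ (k ^ (-p) * (2 * Real.exp 1)) * (s * Real.exp M) :=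
            mul_le_mul_of_nonneg_right hc' hsm
        _ = (2 * Real.exp 1) * (k ^ (-p) * (s * Real.exp M)) := by ring
        _ ≤ 2 * Real.exp 1 * (p - 1 + τ) := by
            apply mul_le_mul_of_nonneg_left hS5 (by positivity)
    have hEM : Real.exp M = Real.exp (M - 1) * Real.exp 1 := by
      rw [← Real.exp_add]; congr 1; ring
    have hEM1 : Real.exp 1 ≤ Real.exp (M - 1) := Real.exp_le_exp.mpr (by linarith)
    have hS7 : s * Real.exp 1 * Real.exp 1 ≤ 2 * Real.exp 1 * (p - 1 + τ) := by
      calc s * Real.exp 1 * Real.exp 1 ≤ s * Real.exp (M-1) * Real.exp 1 := by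
            apply mul_le_mul_of_nonneg_right (mul_le_mul_of_nonneg_left hEM1 hs.le)
              (Real.exp_pos 1).le
        _ = s * Real.exp M := by rw [hEM]; ring
        _ ≤ 2 * Real.exp 1 * (p - 1 + τ) := hS6
    have hS8 : s * Real.exp 1 ≤ 2 * (p - 1 + τ) := by
      have h1 : (s * Real.exp 1) * Real.exp 1 ≤ (2 * (p - 1 + τ)) * Real.exp 1 := by
        calc (s * Real.exp 1) * Real.exp 1 ≤ 2 * Real.exp 1 * (p - 1 + τ) := hS7
          _ = (2 * (p - 1 + τ)) * Real.exp 1 := by ring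
      exact le_of_mul_le_mul_right h1 (Real.exp_pos 1)
    linarith only [hnum, hcon, hMp, hS8]
  · -- Case p < 2, M = 2
    have hMeq : M = 2 := by
      have h1 : ⌈p⌉₊ ≤ 2 := Nat.ceil_le.mpr (by exact_mod_cast hp2.le)
      have h2 : M ≤ 2 := by rw [hMdef]; exact_mod_cast h1
      linarith
    have hTgt : τ < 2*τ := by linarith
    have hlow := aux_lower (p := p) (by linarith) hτ hTgt
    rw [← hIdef] at hlow
    have hτR : τ * (P * (2*τ) ^ (-p)) = (2:ℝ) ^ (-p) := by
      rw [Real.mul_rpow (by norm_num) hτ.le, hPdef]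
      have h1 : τ ^ (p-1) * τ ^ (-p) = τ ^ (-1:ℝ) := by
        rw [← Real.rpow_add hτ, show p - 1 + -p = (-1:ℝ) by ring]
      calc τ * (τ ^ (p-1) * ((2:ℝ) ^ (-p) * τ ^ (-p)))
          = (τ ^ (p-1) * τ ^ (-p)) * τ * (2:ℝ) ^ (-p) := by ring
        _ = τ ^ (-1:ℝ) * τ * (2:ℝ) ^ (-p) := by rw [h1]
        _ = (2:ℝ) ^ (-p) := by rw [Real.rpow_neg_one, inv_mul_cancel₀ (ne_of_gt hτ), one_mul]
    have hc0 : (0:ℝ) < (2:ℝ) ^ (-p) := Real.rpow_pos_of_pos (by norm_num) _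
    have h2p : (1:ℝ)/4 ≤ (2:ℝ) ^ (-p) := by
      have h1 : (2:ℝ) ^ (-2:ℝ) ≤ (2:ℝ) ^ (-p) :=
        Real.rpow_le_rpow_of_exponent_le one_le_two (by linarith)
      have h4 : (2:ℝ) ^ (-2:ℝ) = 1/4 := by
        rw [show (-2:ℝ) = ((-2:ℤ):ℝ) by norm_num, Real.rpow_intCast]; norm_num
      rw [h4] at h1; exact h1
    have hbexp : Real.exp (-(2*τ)) = Real.exp (-τ) * Real.exp (-τ) := by
      rw [← Real.exp_add]; congr 1; ring
    have hA4 : Real.exp (-τ) * (1 + τ) ≤ 1 := by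
      have h1 := Real.add_one_le_exp τ
      have h2 : Real.exp (-τ) * Real.exp τ = 1 := by rw [← Real.exp_add]; norm_num
      linarith only [mul_le_mul_of_nonneg_left h1 ha0.le, h2]
    have hA : Real.exp (-τ) * τ ≤ (Real.exp (-τ) - Real.exp (-(2*τ))) * (1 + τ) := by
      rw [hbexp]
      linarith only [mul_nonneg ha0.le (sub_nonneg.mpr hA4)]
    have hS1 : y * ((2:ℝ) ^ (-p) * (Real.exp (-τ) - Real.exp (-(2*τ)))) ≤ τ := by
      have h1 : P * ((2*τ) ^ (-p) * (Real.exp (-τ) - Real.exp (-(2*τ)))) ≤ 1/y := by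
        rw [← hPI]
        exact mul_le_mul_of_nonneg_left hlow hP0.le
      have h2 := mul_le_mul_of_nonneg_left h1 hτ.le
      have h3 : τ * (P * ((2*τ) ^ (-p) * (Real.exp (-τ) - Real.exp (-(2*τ)))))
          = (2:ℝ) ^ (-p) * (Real.exp (-τ) - Real.exp (-(2*τ))) := by
        calc τ * (P * ((2*τ) ^ (-p) * (Real.exp (-τ) - Real.exp (-(2*τ)))))
            = (τ * (P * (2*τ) ^ (-p))) * (Real.exp (-τ) - Real.exp (-(2*τ))) := by ring
          _ = (2:ℝ) ^ (-p) * (Real.exp (-τ) - Real.exp (-(2*τ))) := by rw [hτR]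
      rw [h3] at h2
      have h4 := mul_le_mul_of_nonneg_left h2 hy0.le
      have h5 : y * (τ * (1/y)) = τ := by field_simp
      rw [h5] at h4
      exact h4
    have hS2 : y * ((2:ℝ) ^ (-p)) * (Real.exp (-τ) * τ) ≤ τ * (1 + τ) := by
      have h1 : (0:ℝ) ≤ y * (2:ℝ) ^ (-p) := by positivity
      calc y * ((2:ℝ) ^ (-p)) * (Real.exp (-τ) * τ)
          ≤ y * ((2:ℝ) ^ (-p)) * ((Real.exp (-τ) - Real.exp (-(2*τ))) * (1 + τ)) :=
            mul_le_mul_of_nonneg_left hA h1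
        _ = (y * ((2:ℝ) ^ (-p) * (Real.exp (-τ) - Real.exp (-(2*τ))))) * (1 + τ) := by ring
        _ ≤ τ * (1 + τ) := mul_le_mul_of_nonneg_right hS1 (by linarith)
    have hS3 : y * ((2:ℝ) ^ (-p)) * Real.exp (-τ) ≤ 1 + τ := by
      have h1 : (y * ((2:ℝ) ^ (-p)) * Real.exp (-τ)) * τ ≤ (1 + τ) * τ := by
        calc (y * ((2:ℝ) ^ (-p)) * Real.exp (-τ)) * τ
            = y * ((2:ℝ) ^ (-p)) * (Real.exp (-τ) * τ) := by ring
          _ ≤ τ * (1 + τ) := hS2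
          _ = (1 + τ) * τ := by ring
      exact le_of_mul_le_mul_right h1 hτ
    have hS5 : (2:ℝ) ^ (-p) * (s * Real.exp M) ≤ 1 + τ := by
      calc (2:ℝ) ^ (-p) * (s * Real.exp M) ≤ (2:ℝ) ^ (-p) * (Real.exp (-τ) * y) :=
            mul_le_mul_of_nonneg_left hA5 hc0.le
        _ = y * ((2:ℝ) ^ (-p)) * Real.exp (-τ) := by ring
        _ ≤ 1 + τ := hS3
    have hS6 : 1/4 * (s * (Real.exp 1 * Real.exp 1)) ≤ 1 + τ := by
      have hEM : Real.exp M = Real.exp 1 * Real.exp 1 := by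
        rw [hMeq, ← Real.exp_add]; norm_num
      have hsm : (0:ℝ) ≤ s * Real.exp M := by positivity
      calc 1/4 * (s * (Real.exp 1 * Real.exp 1)) = 1/4 * (s * Real.exp M) := by rw [hEM]
        _ ≤ (2:ℝ) ^ (-p) * (s * Real.exp M) := mul_le_mul_of_nonneg_right h2p hsm
        _ ≤ 1 + τ := hS5
    have hcon' : τ ≤ s - ℓ - 2 := by rw [hMeq] at hcon; exact hcon
    have hprod : 0 < s * (Real.exp 1 * (Real.exp 1 - 2)) := by
      apply mul_pos hs
      apply mul_pos (Real.exp_pos 1)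
      linarith
    linarith only [hS6, hcon', hnum, hprod]
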